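/- Let λ be a partition with at most 3 parts and total size m. An integer vector (x,y,z) with x,y,z ≥ 0 and x+y+z = m is the content vector of some semistandard Young tableau of shape λ if and only if the weakly decreasing rearrangement of (x,y,z) is dominated by λ. (Equivalently, the Schur polynomial s_λ in 3 variables has saturated Newton polytope.) -/

import Mathlib

set_option maxHeartbeats 1000000

/-- The content of a semistandard Young tableau: `content T v` is the number of cells whose
entry equals `v`. -/
def content {μ : YoungDiagram} (T : SemistandardYoungTableau μ) (v : ℕ) : ℕ :=
  (μ.cells.filter fun c => T c.1 c.2 = v).card

private lemma forward_aux (l1 l2 l3 m : ℕ) (hl : l1 ≥ l2 ∧ l2 ≥ l3) (hm : l1 + l2 + l3 = m)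
    (x y z : ℕ) (hxyz : x + y + z = m) (D : YoungDiagram)
    (hD : ∀ r : ℕ, D.rowLen r = if r = 0 then l1 else if r = 1 then l2 else
      if r = 2 then l3 else 0)
    (T : SemistandardYoungTableau D) (h3 : ∀ c ∈ D.cells, T c.1 c.2 < 3) :
    ∀ v < 3, content T v ≤ l1 ∧ l3 ≤ content T v := by
  intro v hv
  constructor
  · have := Finset.card_le_card_of_injOn (fun c : ℕ × ℕ => c.2)
      (s := D.cells.filter fun c => T c.1 c.2 = v) (t := Finset.range l1)
      ?_ ?_
    · simpa [content, Finset.card_range] using this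
    · rintro ⟨i, j⟩ hc
      simp only [Finset.mem_coe, Finset.mem_filter, YoungDiagram.mem_cells,
        YoungDiagram.mem_iff_lt_rowLen] at hc
      have h2 := D.rowLen_anti 0 i (Nat.zero_le i)
      rw [hD 0] at h2
      norm_num at h2
      simp only [Finset.mem_coe, Finset.mem_range]
      omega
    · rintro ⟨i1, j1⟩ h1 ⟨i2, j2⟩ h2 hj
      simp only [Finset.mem_coe, Finset.mem_filter, YoungDiagram.mem_cells] at h1 h2
      simp only at hj
      subst hj
      rcases lt_trichotomy i1 i2 with h | h | h
      · have := T.col_strict h h2.1; omega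
      · simp [h]
      · have := T.col_strict h h1.1; omega
  · -- for j < l3, T i j = i for i = 0,1,2
      have key : ∀ j < l3, ∀ i < 3, T i j = i := by
        intro j hj i hi
        have m2 : (2, j) ∈ D := by
          rw [YoungDiagram.mem_iff_lt_rowLen, hD 2]; simpa
        have m1 : (1, j) ∈ D := D.up_left_mem (by norm_num) (le_refl j) m2
        have m0 : (0, j) ∈ D := D.up_left_mem (by norm_num) (le_refl j) m2
        have c01 := T.col_strict (by norm_num : (0:ℕ) < 1) m1
        have c12 := T.col_strict (by norm_num : (1:ℕ) < 2) m2
        have b2 := h3 (2, j) ((YoungDiagram.mem_cells _).2 m2)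
        simp only at b2
        interval_cases i <;> omega
      have := Finset.card_le_card_of_injOn (fun j : ℕ => ((v, j) : ℕ × ℕ))
        (s := Finset.range l3) (t := D.cells.filter fun c => T c.1 c.2 = v) ?_ ?_
      · simpa [content] using this
      · intro j hj
        simp only [Finset.mem_coe, Finset.mem_range] at hj
        simp only [Finset.mem_coe, Finset.mem_filter, YoungDiagram.mem_cells,
          YoungDiagram.mem_iff_lt_rowLen, hD v]
        constructor
        · interval_cases v <;> simp <;> omega
        · exact key j hj v hv
      · intro a _ b _ hab
        simpa using hab


/-- the filling: row 0 = x zeros, p ones, rest twos; row 1 = a ones then twos; row 2 = twos -/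
def tab (x p l1 a l2 l3 : ℕ) : ℕ → ℕ → ℕ
  | 0, j => if j < x then 0 else if j < x + p then 1 else if j < l1 then 2 else 0
  | 1, j => if j < a then 1 else if j < l2 then 2 else 0
  | 2, j => if j < l3 then 2 else 0
  | _ + 3, _ => 0

lemma content_eq {D : YoungDiagram} (T : SemistandardYoungTableau D) (f : ℕ → ℕ → ℕ)
    (hf : ∀ i j, T i j = f i j) (v : ℕ) :
    content T v = (D.cells.filter fun c => f c.1 c.2 = v).card := by
  unfold content
  congr 1
  apply Finset.filter_congr
  intro c _
  simp [hf]

private lemma backward_aux (l1 l2 l3 m : ℕ) (hl : l1 ≥ l2 ∧ l2 ≥ l3) (hm : l1 + l2 + l3 = m)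
    (x y z : ℕ) (hxyz : x + y + z = m) (D : YoungDiagram)
    (hD : ∀ r : ℕ, D.rowLen r = if r = 0 then l1 else if r = 1 then l2 else
      if r = 2 then l3 else 0)
    (h1 : max x (max y z) ≤ l1) (h2 : m - min x (min y z) ≤ l1 + l2) :
    (∃ T : SemistandardYoungTableau D,
        (∀ c ∈ D.cells, T c.1 c.2 < 3) ∧
        content T 0 = x ∧ content T 1 = y ∧ content T 2 = z) := by
  have hmem : ∀ i j : ℕ, (i, j) ∈ D ↔ (i = 0 ∧ j < l1) ∨ (i = 1 ∧ j < l2) ∨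
      (i = 2 ∧ j < l3) := by
    intro i j
    rw [YoungDiagram.mem_iff_lt_rowLen, hD]
    split_ifs <;> omega
  obtain ⟨a, p, hl3a, hax, hay, hal2, hpy, hxp2, hxp1⟩ :
      ∃ a p : ℕ, l3 ≤ a ∧ a ≤ x ∧ a ≤ y ∧ a ≤ l2 ∧ a + p = y ∧ l2 ≤ x + p ∧ x + p ≤ l1 := by
    refine ⟨max l3 (x + y - l1), y - max l3 (x + y - l1), ?_, ?_, ?_, ?_, ?_, ?_, ?_⟩ <;> omega
  have hrw : ∀ (i j1 j2 : ℕ), j1 < j2 → (i, j2) ∈ D →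
      tab x p l1 a l2 l3 i j1 ≤ tab x p l1 a l2 l3 i j2 := by
    intro i j1 j2 hj hcell
    rw [hmem] at hcell
    rcases hcell with ⟨rfl, h⟩ | ⟨rfl, h⟩ | ⟨rfl, h⟩ <;>
      simp only [tab] <;> split_ifs <;> omega
  have hcs : ∀ (i1 i2 j : ℕ), i1 < i2 → (i2, j) ∈ D →
      tab x p l1 a l2 l3 i1 j < tab x p l1 a l2 l3 i2 j := by
    intro i1 i2 j hi hcell
    rw [hmem] at hcell
    rcases hcell with ⟨rfl, h⟩ | ⟨rfl, h⟩ | ⟨rfl, h⟩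
    · omega
    · interval_cases i1
      simp only [tab]; split_ifs <;> (try simp) <;> omega
    · interval_cases i1 <;> · simp only [tab]; split_ifs <;> (try simp) <;> omega
  have hz : ∀ (i j : ℕ), (i, j) ∉ D → tab x p l1 a l2 l3 i j = 0 := by
    intro i j hcell
    rw [hmem] at hcell
    push_neg at hcell
    rcases i with _ | _ | _ | i <;> simp only [tab] <;> split_ifs <;> omega
  obtain ⟨T, hT⟩ : ∃ T : SemistandardYoungTableau D,
      ∀ i j, T i j = tab x p l1 a l2 l3 i j :=
    ⟨⟨tab x p l1 a l2 l3, fun h hc => hrw _ _ _ h hc, fun h hc => hcs _ _ _ h hc,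
      fun hc => hz _ _ hc⟩, fun _ _ => rfl⟩
  have hcard : ∀ v : ℕ, content T v =
      ((Finset.range l1).filter (fun j => tab x p l1 a l2 l3 0 j = v)).card +
      ((Finset.range l2).filter (fun j => tab x p l1 a l2 l3 1 j = v)).card +
      ((Finset.range l3).filter (fun j => tab x p l1 a l2 l3 2 j = v)).card := by
    intro v
    have hcells : D.cells =
        ((Finset.range l1).map ⟨fun j => ((0 : ℕ), j), fun u v h => by simpa using h⟩) ∪
        ((Finset.range l2).map ⟨fun j => ((1 : ℕ), j), fun u v h => by simpa using h⟩) ∪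
        ((Finset.range l3).map ⟨fun j => ((2 : ℕ), j), fun u v h => by simpa using h⟩) := by
      ext ⟨i, j⟩
      simp only [Finset.mem_union, Finset.mem_map, Finset.mem_range,
        Function.Embedding.coeFn_mk, YoungDiagram.mem_cells, hmem, Prod.mk.injEq]
      constructor
      · rintro (⟨rfl, h⟩ | ⟨rfl, h⟩ | ⟨rfl, h⟩)
        exacts [Or.inl (Or.inl ⟨j, h, rfl⟩), Or.inl (Or.inr ⟨j, h, rfl⟩),
          Or.inr ⟨j, h, rfl⟩]
      · rintro ((⟨w, h, rfl, rfl⟩ | ⟨w, h, rfl, rfl⟩) | ⟨w, h, rfl, rfl⟩) <;> simp [h]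
    have hdisj01 : ∀ (s t : Finset ℕ) (P : ℕ × ℕ → Prop) [DecidablePred P]
        (u v : ℕ) (huv : u ≠ v)
        (e1 : ℕ ↪ ℕ × ℕ) (e2 : ℕ ↪ ℕ × ℕ) (he1 : ∀ j, (e1 j).1 = u)
        (he2 : ∀ j, (e2 j).1 = v),
        Disjoint ((s.map e1).filter P) ((t.map e2).filter P) := by
      intro s t P _ u v huv e1 e2 he1 he2
      rw [Finset.disjoint_left]
      rintro c hc1 hc2
      simp only [Finset.mem_filter, Finset.mem_map] at hc1 hc2
      obtain ⟨⟨j1, _, rfl⟩, _⟩ := hc1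
      obtain ⟨⟨j2, _, heq⟩, _⟩ := hc2
      apply huv
      rw [← he1 j1, ← heq, he2 j2]
    rw [content_eq _ (tab x p l1 a l2 l3) hT, hcells,
      Finset.filter_union, Finset.filter_union,
      Finset.card_union_of_disjoint, Finset.card_union_of_disjoint,
      Finset.filter_map, Finset.filter_map, Finset.filter_map,
      Finset.card_map, Finset.card_map, Finset.card_map]
    rotate_left
    · exact hdisj01 _ _ _ 0 1 (by norm_num) _ _ (fun j => rfl) (fun j => rfl)
    · refine Finset.disjoint_union_left.2 ⟨?_, ?_⟩
      · exact hdisj01 _ _ _ 0 2 (by norm_num) _ _ (fun j => rfl) (fun j => rfl)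
      · exact hdisj01 _ _ _ 1 2 (by norm_num) _ _ (fun j => rfl) (fun j => rfl)
    simp only [Function.comp_def, Function.Embedding.coeFn_mk]
    rfl
  refine ⟨T, ?_, ?_, ?_, ?_⟩
  · -- entries < 3
    rintro ⟨i, j⟩ hc
    rw [YoungDiagram.mem_cells, hmem] at hc
    rw [hT]
    rcases hc with ⟨rfl, h⟩ | ⟨rfl, h⟩ | ⟨rfl, h⟩ <;>
      simp only [tab] <;> split_ifs <;> omega
  · -- content 0 = x
    have r0 : (Finset.range l1).filter (fun j => tab x p l1 a l2 l3 0 j = 0) =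
        Finset.range x := by
      ext j; simp only [Finset.mem_filter, Finset.mem_range]
      simp only [tab]; split_ifs <;> (try simp) <;> omega
    have r1 : (Finset.range l2).filter (fun j => tab x p l1 a l2 l3 1 j = 0) = ∅ := by
      ext j; simp only [Finset.mem_filter, Finset.mem_range, Finset.notMem_empty,
        iff_false, not_and]; intro hj; simp only [tab]; split_ifs <;> (try simp) <;> omega
    have r2 : (Finset.range l3).filter (fun j => tab x p l1 a l2 l3 2 j = 0) = ∅ := by
      ext j; simp only [Finset.mem_filter, Finset.mem_range, Finset.notMem_empty,
        iff_false, not_and]; intro hj; simp only [tab]; split_ifs <;> (try simp) <;> omega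
    rw [hcard, r0, r1, r2]; simp
  · -- content 1 = y
    have r0 : (Finset.range l1).filter (fun j => tab x p l1 a l2 l3 0 j = 1) =
        Finset.Ico x (x + p) := by
      ext j; simp only [Finset.mem_filter, Finset.mem_range, Finset.mem_Ico]
      simp only [tab]; split_ifs <;> (try simp) <;> omega
    have r1 : (Finset.range l2).filter (fun j => tab x p l1 a l2 l3 1 j = 1) =
        Finset.range a := by
      ext j; simp only [Finset.mem_filter, Finset.mem_range]
      simp only [tab]; split_ifs <;> (try simp) <;> omega
    have r2 : (Finset.range l3).filter (fun j => tab x p l1 a l2 l3 2 j = 1) = ∅ := by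
      ext j; simp only [Finset.mem_filter, Finset.mem_range, Finset.notMem_empty,
        iff_false, not_and]; intro hj; simp only [tab]; split_ifs <;> (try simp) <;> omega
    rw [hcard, r0, r1, r2]; simp [Nat.card_Ico]; omega
  · -- content 2 = z
    have r0 : (Finset.range l1).filter (fun j => tab x p l1 a l2 l3 0 j = 2) =
        Finset.Ico (x + p) l1 := by
      ext j; simp only [Finset.mem_filter, Finset.mem_range, Finset.mem_Ico]
      simp only [tab]; split_ifs <;> (try simp) <;> omega
    have r1 : (Finset.range l2).filter (fun j => tab x p l1 a l2 l3 1 j = 2) =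
        Finset.Ico a l2 := by
      ext j; simp only [Finset.mem_filter, Finset.mem_range, Finset.mem_Ico]
      simp only [tab]; split_ifs <;> (try simp) <;> omega
    have r2 : (Finset.range l3).filter (fun j => tab x p l1 a l2 l3 2 j = 2) =
        Finset.range l3 := by
      ext j; simp only [Finset.mem_filter, Finset.mem_range, and_iff_left_iff_imp]
      intro hj; simp only [tab]; split_ifs <;> (try simp) <;> omega
    rw [hcard, r0, r1, r2]; simp [Nat.card_Ico]; omega


/-- Let `λ = (l1,l2,l3)` be a partition with at most 3 parts and size `m`.  A nonnegative
integer vector `(x,y,z)` with `x+y+z = m` is the content of a semistandard Young tableau of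
shape `λ` with entries in `{0,1,2}` iff its weakly decreasing rearrangement is dominated by
`λ`, i.e. `max(x,y,z) ≤ l1` and `m - min(x,y,z) ≤ l1 + l2`.  (Equivalently, the Schur
polynomial `s_λ` in 3 variables has saturated Newton polytope.) -/
theorem stmt_18 (l1 l2 l3 m : ℕ) (hl : l1 ≥ l2 ∧ l2 ≥ l3) (hm : l1 + l2 + l3 = m)
    (x y z : ℕ) (hxyz : x + y + z = m) (D : YoungDiagram)
    (hD : ∀ r : ℕ, D.rowLen r = if r = 0 then l1 else if r = 1 then l2 else
      if r = 2 then l3 else 0) :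
    (∃ T : SemistandardYoungTableau D,
        (∀ c ∈ D.cells, T c.1 c.2 < 3) ∧
        content T 0 = x ∧ content T 1 = y ∧ content T 2 = z) ↔
      (max x (max y z) ≤ l1 ∧ m - min x (min y z) ≤ l1 + l2) := by
  constructor
  · rintro ⟨T, h3, hx, hy, hz⟩
    have h0 := forward_aux l1 l2 l3 m hl hm x y z hxyz D hD T h3 0 (by norm_num)
    have h1 := forward_aux l1 l2 l3 m hl hm x y z hxyz D hD T h3 1 (by norm_num)
    have h2 := forward_aux l1 l2 l3 m hl hm x y z hxyz D hD T h3 2 (by norm_num)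
    rw [hx] at h0; rw [hy] at h1; rw [hz] at h2
    omega
  · rintro ⟨h1, h2⟩
    exact backward_aux l1 l2 l3 m hl hm x y z hxyz D hD h1 h2
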